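/- arXiv:2306.12750 — 5 statements merged into one kernel-verified Lean document; each statement's English description precedes it below -/
import Mathlib

section
/- Let A be a ring, e ∈ A an idempotent, and M a left eAe-module. The assignment sending p⊗m ∈ Ae ⊗_{eAe} M to the map a ↦ (e·a·p·e)·m is a well-defined homomorphism of left A-modules ν_M : Ae ⊗_{eAe} M → Hom_{eAe}(A, M), where Hom_{eAe}(A,M) carries the left A-module structure (b·φ)(a) = φ(a·b). -/
open DirectSum


universe u

section Common

variable {A : Type u} [Ring A]

/-- The left ideal `Ae = {x | x * e = x}`. -/
def lIdeal (e : A) : Submodule A A where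
  carrier := {x | x * e = x}
  add_mem' := by intro a b ha hb; simp only [Set.mem_setOf_eq] at *; rw [add_mul, ha, hb]
  zero_mem' := by simp
  smul_mem' := by intro c x hx; simp only [Set.mem_setOf_eq, smul_eq_mul] at *; rw [mul_assoc, hx]

/-- The right ideal `eA = {x | e * x = x}`, as an additive subgroup. -/
def rIdeal (e : A) : AddSubgroup A where
  carrier := {x | e * x = x}
  add_mem' := by intro a b ha hb; simp only [Set.mem_setOf_eq] at *; rw [mul_add, ha, hb]
  zero_mem' := by simp
  neg_mem' := by intro a ha; simp only [Set.mem_setOf_eq] at *; rw [mul_neg, ha]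

/-- The additive subgroup `eAe = {x | e * x = x ∧ x * e = x}`. -/
def cornerAdd (e : A) : AddSubgroup A where
  carrier := {x | e * x = x ∧ x * e = x}
  add_mem' := by
    rintro a b ⟨ha1, ha2⟩ ⟨hb1, hb2⟩
    exact ⟨by rw [mul_add, ha1, hb1], by rw [add_mul, ha2, hb2]⟩
  zero_mem' := ⟨by simp, by simp⟩
  neg_mem' := by rintro a ⟨h1, h2⟩; exact ⟨by rw [mul_neg, h1], by rw [neg_mul, h2]⟩

/-- The corner ring `eAe` of an idempotent `e`. -/
def Corner (e : A) (_he : IsIdempotentElem e) : Type u := ↥(cornerAdd e)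

namespace Corner

variable {e : A} {he : IsIdempotentElem e}

instance : AddCommGroup (Corner e he) := inferInstanceAs (AddCommGroup ↥(cornerAdd e))

instance instRing : Ring (Corner e he) where
  __ := (inferInstance : AddCommGroup (Corner e he))
  mul x y := ⟨x.1 * y.1, by rw [← mul_assoc, x.2.1], by rw [mul_assoc, y.2.2]⟩
  one := ⟨e, he, he⟩
  mul_assoc x y z := Subtype.ext (mul_assoc _ _ _)
  one_mul x := Subtype.ext x.2.1
  mul_one x := Subtype.ext x.2.2
  left_distrib x y z := Subtype.ext (mul_add _ _ _)
  right_distrib x y z := Subtype.ext (add_mul _ _ _)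
  zero_mul x := Subtype.ext (zero_mul _)
  mul_zero x := Subtype.ext (mul_zero _)

@[simp] lemma val_mul (x y : Corner e he) : (x * y).1 = x.1 * y.1 := rfl
@[simp] lemma val_one : (1 : Corner e he).1 = e := rfl
@[simp] lemma val_add (x y : Corner e he) : (x + y).1 = x.1 + y.1 := rfl

end Corner

end Common
section Common2

variable {A : Type u} [Ring A] {e : A} {he : IsIdempotentElem e}

/-- `eF = {x ∈ F | e • x = x}`, realising `eA ⊗_A F`. -/
def eSub (e : A) (F : Type u) [AddCommGroup F] [Module A F] : AddSubgroup F where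
  carrier := {x | e • x = x}
  add_mem' := by intro a b ha hb; simp only [Set.mem_setOf_eq] at *; rw [smul_add, ha, hb]
  zero_mem' := by simp
  neg_mem' := by intro a ha; simp only [Set.mem_setOf_eq] at *; rw [smul_neg, ha]

variable {F : Type u} [AddCommGroup F] [Module A F]

instance : SMul (Corner e he) ↥(eSub e F) :=
  ⟨fun c x => ⟨c.1 • x.1, by
    show e • (c.1 • x.1) = c.1 • x.1
    rw [← mul_smul, c.2.1]⟩⟩

@[simp] lemma eSub_smul_val (c : Corner e he) (x : ↥(eSub e F)) :
    (c • x : ↥(eSub e F)).1 = c.1 • x.1 := rfl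

instance : Module (Corner e he) ↥(eSub e F) where
  smul := (· • ·)
  one_smul x := Subtype.ext (by show e • x.1 = x.1; exact x.2)
  mul_smul c d x := Subtype.ext (by show (c.1 * d.1) • x.1 = c.1 • d.1 • x.1; rw [mul_smul])
  smul_zero c := Subtype.ext (by show c.1 • (0 : F) = 0; simp)
  smul_add c x y := Subtype.ext (by show c.1 • (x.1 + y.1) = c.1 • x.1 + c.1 • y.1; rw [smul_add])
  add_smul c d x := Subtype.ext (by show (c.1 + d.1) • x.1 = c.1 • x.1 + d.1 • x.1; rw [add_smul])
  zero_smul x := Subtype.ext (by show (0 : A) • x.1 = 0; simp)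

/-- `eA` as a left module over the corner ring. -/
instance : SMul (Corner e he) ↥(rIdeal e) :=
  ⟨fun c q => ⟨c.1 * q.1, by show e * (c.1 * q.1) = c.1 * q.1; rw [← mul_assoc, c.2.1]⟩⟩

@[simp] lemma rIdeal_smul_val (c : Corner e he) (q : ↥(rIdeal e)) :
    (c • q : ↥(rIdeal e)).1 = c.1 * q.1 := rfl

instance : Module (Corner e he) ↥(rIdeal e) where
  smul := (· • ·)
  one_smul q := Subtype.ext (by show e * q.1 = q.1; exact q.2)
  mul_smul c d q := Subtype.ext (by show (c.1 * d.1) * q.1 = c.1 * (d.1 * q.1); rw [mul_assoc])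
  smul_zero c := Subtype.ext (by show c.1 * (0 : A) = 0; simp)
  smul_add c q q' := Subtype.ext (by show c.1 * (q.1 + q'.1) = c.1 * q.1 + c.1 * q'.1; rw [mul_add])
  add_smul c d q := Subtype.ext (by show (c.1 + d.1) * q.1 = c.1 * q.1 + d.1 * q.1; rw [add_mul])
  zero_smul q := Subtype.ext (by show (0 : A) * q.1 = 0; simp)

/-- `Hom_{eAe}(A, M)`, where `A` carries the (non-unital) left `eAe`-action by
left multiplication: additive maps `φ : A → M` with `φ((exe)·a) = (exe)•φ(a)`. -/
def homSub (e : A) (he : IsIdempotentElem e) (M : Type u) [AddCommGroup M]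
    [Module (Corner e he) M] : AddSubgroup (A →+ M) where
  carrier := {φ | ∀ (c : Corner e he) (a : A), φ (c.1 * a) = c • φ a}
  add_mem' := by intro φ ψ hφ hψ c a; simp [hφ c a, hψ c a, smul_add]
  zero_mem' := by intro c a; simp
  neg_mem' := by intro φ hφ c a; simp [hφ c a]

/-- For `p ∈ Ae` and `a ∈ A`, the element `e a p e = e (a p) e` of the corner ring. -/
def cornerMul (e : A) (he : IsIdempotentElem e) (p : ↥(lIdeal e)) (a : A) : Corner e he :=
  ⟨e * (a * p.1),
   by simp only [← mul_assoc]; rw [he],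
   by have hp : p.1 * e = p.1 := p.2
      simp only [mul_assoc]; rw [hp]⟩

/-- `e` as an element of `Ae`. -/
def lUnit (e : A) (he : IsIdempotentElem e) : ↥(lIdeal e) := ⟨e, he⟩

/-- A tensor product `Ae ⊗_{eAe} N` of the right `eAe`-module `Ae` with a left
`eAe`-module `N`: an abelian group `T` with a balanced biadditive pairing which is
universal among such. -/
structure CornerTensor (e : A) (he : IsIdempotentElem e) (N : Type u) [AddCommGroup N]
    [Module (Corner e he) N] (T : Type u) [AddCommGroup T] : Type (u + 1) where
  pair : ↥(lIdeal e) →+ N →+ T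
  balanced : ∀ (p : ↥(lIdeal e)) (c : Corner e he) (m : N),
    pair ⟨p.1 * c.1, by show (p.1 * c.1) * e = p.1 * c.1; rw [mul_assoc, c.2.2]⟩ m
      = pair p (c • m)
  span : AddSubgroup.closure (Set.range fun z : ↥(lIdeal e) × N => pair z.1 z.2) = ⊤
  lift : ∀ {P : Type u} [AddCommGroup P] (g : ↥(lIdeal e) →+ N →+ P),
    (∀ (p : ↥(lIdeal e)) (c : Corner e he) (m : N),
      g ⟨p.1 * c.1, by show (p.1 * c.1) * e = p.1 * c.1; rw [mul_assoc, c.2.2]⟩ m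
        = g p (c • m)) → (T →+ P)
  lift_pair : ∀ {P : Type u} [AddCommGroup P] (g : ↥(lIdeal e) →+ N →+ P) (hg) (p : ↥(lIdeal e))
    (m : N), lift g hg (pair p m) = g p m

end Common2
section Fam

variable {A : Type u} [Ring A] {n : ℕ}

/-- For a complete set of orthogonal idempotents `e₀,…,e_n`, the element
`f_i = e₀ + e_i` is again idempotent. -/
lemma fIdem (e : Fin (n + 1) → A) (hidem : ∀ i, IsIdempotentElem (e i))
    (horth : ∀ i j, i ≠ j → e i * e j = 0) (i : Fin n) :
    IsIdempotentElem (e 0 + e i.succ) := by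
  have h1 := hidem 0
  have h2 := hidem i.succ
  have h3 := horth 0 i.succ (Fin.succ_ne_zero i).symm
  have h4 := horth i.succ 0 (Fin.succ_ne_zero i)
  unfold IsIdempotentElem at *
  rw [add_mul, mul_add, mul_add, h1, h2, h3, h4, add_zero, zero_add]

end Fam

/-- Let `A` be a ring, `e ∈ A` an idempotent and `M` a left `eAe`-module.
The assignment sending `p ⊗ m ∈ Ae ⊗_{eAe} M` to the map `a ↦ (e·a·p·e)·m` is a
well-defined homomorphism of left `A`-modules `ν_M : Ae ⊗_{eAe} M → Hom_{eAe}(A, M)`,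
where `Hom_{eAe}(A,M)` carries the left `A`-module structure `(b·φ)(a) = φ(a·b)`.
Here the tensor product `Ae ⊗_{eAe} M` is presented by a `CornerTensor` datum `(T, pair)`. -/
theorem stmt_1 {A M T : Type u} [Ring A] (e : A) (he : IsIdempotentElem e)
    [AddCommGroup M] [Module (Corner e he) M]
    [AddCommGroup T] [Module A T] (ct : CornerTensor e he M T)
    (hT : ∀ (b : A) (p : ↥(lIdeal e)) (m : M), b • ct.pair p m = ct.pair (b • p) m) :
    ∃ ν : T →+ ↥(homSub e he M),
      (∀ (p : ↥(lIdeal e)) (m : M) (a : A),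
        ((ν (ct.pair p m)).1 : A →+ M) a = cornerMul e he p a • m) ∧
      (∀ (b : A) (t : T) (a : A),
        ((ν (b • t)).1 : A →+ M) a = ((ν t).1 : A →+ M) (a * b)) := by
  classical
  -- cornerMul is additive in `a` and in `p`
  have cm_add : ∀ (p : ↥(lIdeal e)) (a₁ a₂ : A),
      cornerMul e he p (a₁ + a₂) = cornerMul e he p a₁ + cornerMul e he p a₂ := by
    intro p a₁ a₂
    apply Subtype.ext
    show e * ((a₁ + a₂) * p.1) = e * (a₁ * p.1) + e * (a₂ * p.1)
    rw [add_mul, mul_add]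
  have cm_padd : ∀ (p q : ↥(lIdeal e)) (a : A),
      cornerMul e he (p + q) a = cornerMul e he p a + cornerMul e he q a := by
    intro p q a
    apply Subtype.ext
    show e * (a * (p.1 + q.1)) = e * (a * p.1) + e * (a * q.1)
    rw [mul_add, mul_add]
  -- the elementary map `(p, m) ↦ (a ↦ (e a p e) • m)` lands in `homSub`
  have mem_hom : ∀ (p : ↥(lIdeal e)) (m : M),
      (AddMonoidHom.mk' (fun a => cornerMul e he p a • m)
        (fun a₁ a₂ => by show cornerMul e he p (a₁ + a₂) • m = _; rw [cm_add, add_smul])) ∈ homSub e he M := by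
    intro p m c a
    show cornerMul e he p (c.1 * a) • m = c • (cornerMul e he p a • m)
    have : cornerMul e he p (c.1 * a) = c * cornerMul e he p a := by
      apply Subtype.ext
      show e * (c.1 * a * p.1) = c.1 * (e * (a * p.1))
      rw [← mul_assoc c.1 e, c.2.2, mul_assoc, ← mul_assoc e c.1, c.2.1]
    rw [this, mul_smul]
  set gf : ↥(lIdeal e) → M → ↥(homSub e he M) := fun p m =>
    ⟨AddMonoidHom.mk' (fun a => cornerMul e he p a • m)
      (fun a₁ a₂ => by show cornerMul e he p (a₁ + a₂) • m = _; rw [cm_add, add_smul]), mem_hom p m⟩ with hgf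
  have gf_val : ∀ p m a, ((gf p m).1 : A →+ M) a = cornerMul e he p a • m := fun _ _ _ => rfl
  -- package as a biadditive map
  set g : ↥(lIdeal e) →+ M →+ ↥(homSub e he M) :=
    AddMonoidHom.mk' (fun p => AddMonoidHom.mk' (gf p)
        (fun m₁ m₂ => by
          apply Subtype.ext; apply AddMonoidHom.ext; intro a
          show cornerMul e he p a • (m₁ + m₂)
            = ((gf p m₁).1 : A →+ M) a + ((gf p m₂).1 : A →+ M) a
          rw [gf_val, gf_val, smul_add]))
      (fun p q => by
        apply AddMonoidHom.ext; intro m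
        apply Subtype.ext; apply AddMonoidHom.ext; intro a
        show cornerMul e he (p + q) a • m
          = ((gf p m).1 : A →+ M) a + ((gf q m).1 : A →+ M) a
        rw [gf_val, gf_val, cm_padd, add_smul]) with hg
  have g_val : ∀ p m a, ((g p m).1 : A →+ M) a = cornerMul e he p a • m := fun _ _ _ => rfl
  -- balancedness of g
  have hbal : ∀ (p : ↥(lIdeal e)) (c : Corner e he) (m : M),
      g ⟨p.1 * c.1, by show (p.1 * c.1) * e = p.1 * c.1; rw [mul_assoc, c.2.2]⟩ m
        = g p (c • m) := by
    intro p c m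
    apply Subtype.ext; apply AddMonoidHom.ext; intro a
    rw [g_val, g_val]
    have : cornerMul e he ⟨p.1 * c.1, by
          show (p.1 * c.1) * e = p.1 * c.1; rw [mul_assoc, c.2.2]⟩ a
        = cornerMul e he p a * c := by
      apply Subtype.ext
      show e * (a * (p.1 * c.1)) = e * (a * p.1) * c.1
      simp only [mul_assoc]
    rw [this, mul_smul]
  set ν : T →+ ↥(homSub e he M) := ct.lift g hbal with hν
  have νpair : ∀ p m, ν (ct.pair p m) = g p m := fun p m => ct.lift_pair g hbal p m
  refine ⟨ν, ?_, ?_⟩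
  · intro p m a
    rw [νpair]; exact g_val p m a
  · intro b t a
    -- the shift-by-b operator on homSub
    have memβ : ∀ φ : ↥(homSub e he M),
        (AddMonoidHom.mk' (fun a => (φ.1 : A →+ M) (a * b))
          (fun a₁ a₂ => by show (φ.1 : A →+ M) ((a₁ + a₂) * b) = _; rw [add_mul, map_add])) ∈ homSub e he M := by
      intro φ c a'
      show (φ.1 : A →+ M) (c.1 * a' * b) = c • (φ.1 : A →+ M) (a' * b)
      rw [mul_assoc, φ.2 c (a' * b)]
    set β : ↥(homSub e he M) →+ ↥(homSub e he M) :=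
      AddMonoidHom.mk' (fun φ =>
          ⟨AddMonoidHom.mk' (fun a => (φ.1 : A →+ M) (a * b))
            (fun a₁ a₂ => by show (φ.1 : A →+ M) ((a₁ + a₂) * b) = _; rw [add_mul, map_add]), memβ φ⟩)
        (fun φ ψ => by
          apply Subtype.ext; apply AddMonoidHom.ext; intro a'
          show ((φ + ψ).1 : A →+ M) (a' * b)
            = (φ.1 : A →+ M) (a' * b) + (ψ.1 : A →+ M) (a' * b)
          rfl) with hβ
    have key : ∀ t : T, ν (b • t) = β (ν t) := by
      intro t
      have ht : t ∈ AddSubgroup.closure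
          (Set.range fun z : ↥(lIdeal e) × M => ct.pair z.1 z.2) := by
        rw [ct.span]; trivial
      refine AddSubgroup.closure_induction ?_ ?_ ?_ ?_ ht
      · rintro x ⟨⟨p, m⟩, rfl⟩
        rw [hT b p m, νpair, νpair]
        apply Subtype.ext; apply AddMonoidHom.ext; intro a'
        show cornerMul e he (b • p) a' • m = cornerMul e he p (a' * b) • m
        congr 1
        apply Subtype.ext
        show e * (a' * (b * p.1)) = e * (a' * b * p.1)
        rw [mul_assoc a' b]
      · rw [smul_zero, map_zero, map_zero]
      · intro x y _ _ hx hy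
        rw [smul_add, map_add, hx, hy, map_add, map_add]
      · intro x _ hx
        rw [smul_neg, map_neg, hx, map_neg, map_neg]
    rw [key t]
    rfl
end

section
/- Let A be a unital ring and let e_0, e_1, …, e_n be a complete set of orthogonal idempotents of A (i.e. e_i e_j = δ_{ij} e_i and e_0 + e_1 + ⋯ + e_n = 1). For each i ∈ {1,…,n} set f_i = e_0 + e_i, which is an idempotent. Then the map Ψ : ⊕_{i=1}^n A f_i ⊗_{f_i A f_i} f_i A → A given on the i-th summand by p ⊗ q ↦ p·q is a surjective homomorphism of (A,A)-bimodules. -/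
open DirectSum


universe u

/-- Let `e₀,…,e_n` be a complete set of orthogonal idempotents of a
unital ring `A` and `f_i = e₀ + e_i`. The map
`Ψ : ⊕_{i=1}^n A f_i ⊗_{f_i A f_i} f_i A → A` given on the `i`-th summand by
`p ⊗ q ↦ p·q` is a surjective homomorphism of `(A,A)`-bimodules. -/
theorem stmt_4 {A : Type u} [Ring A] {n : ℕ} (hn : 0 < n)
    (e : Fin (n + 1) → A) (hidem : ∀ i, IsIdempotentElem (e i))
    (horth : ∀ i j, i ≠ j → e i * e j = 0) (hsum : ∑ i, e i = 1)
    (T : Fin n → Type u) [∀ i, AddCommGroup (T i)]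
    (ct : ∀ i : Fin n, CornerTensor (e 0 + e i.succ) (fIdem e hidem horth i)
      ↥(rIdeal (e 0 + e i.succ)) (T i))
    [∀ i, Module A (T i)] [∀ i, Module Aᵐᵒᵖ (T i)]
    (hL : ∀ (i : Fin n) (b : A) (p : ↥(lIdeal (e 0 + e i.succ)))
      (q : ↥(rIdeal (e 0 + e i.succ))),
      b • (ct i).pair p q = (ct i).pair (b • p) q)
    (hR : ∀ (i : Fin n) (b : A) (p : ↥(lIdeal (e 0 + e i.succ)))
      (q : ↥(rIdeal (e 0 + e i.succ))),
      MulOpposite.op b • (ct i).pair p q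
        = (ct i).pair p ⟨q.1 * b, by
            show (e 0 + e i.succ) * (q.1 * b) = q.1 * b
            rw [← mul_assoc, q.2]⟩)
    (Ψ : (⨁ i, T i) →+ A)
    (hΨ : ∀ (i : Fin n) (p : ↥(lIdeal (e 0 + e i.succ)))
      (q : ↥(rIdeal (e 0 + e i.succ))),
      Ψ (DirectSum.of T i ((ct i).pair p q)) = p.1 * q.1) :
    Function.Surjective Ψ ∧ (∀ (b : A) (t : ⨁ i, T i), Ψ (b • t) = b * Ψ t) ∧
      (∀ (b : A) (t : ⨁ i, T i), Ψ (MulOpposite.op b • t) = Ψ t * b) := by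
  classical
  haveI : NeZero n := ⟨hn.ne'⟩
  have hof : ∀ (R : Type u) [Ring R] [∀ i, Module R (T i)] (b : R) (i : Fin n) (x : T i),
      b • DirectSum.of T i x = DirectSum.of T i (b • x) := by
    intro R _ _ b i x
    exact (DFinsupp.single_smul b x).symm
  have hfq : ∀ i : Fin n, (e 0 + e i.succ) * e i.succ = e i.succ := by
    intro i
    rw [add_mul, (hidem i.succ), horth 0 i.succ (Fin.succ_ne_zero i).symm, zero_add]
  have hfq0 : (e 0 + e (0 : Fin n).succ) * e 0 = e 0 := by
    rw [add_mul, hidem 0, horth (0 : Fin n).succ 0 (Fin.succ_ne_zero _), add_zero]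
  have hpe : ∀ (i : Fin n) (a : A), (a * e i.succ) * (e 0 + e i.succ) = a * e i.succ := by
    intro i a
    rw [mul_assoc, mul_add, hidem i.succ, horth i.succ 0 (Fin.succ_ne_zero i), zero_add]
  have hpe0 : ∀ a : A, (a * e 0) * (e 0 + e (0 : Fin n).succ) = a * e 0 := by
    intro a
    rw [mul_assoc, mul_add, hidem 0, horth 0 (0 : Fin n).succ (Fin.succ_ne_zero _).symm, add_zero]
  refine ⟨?_, ?_, ?_⟩
  · -- surjectivity
    intro a
    refine ⟨DirectSum.of T 0 ((ct 0).pair ⟨a * e 0, hpe0 a⟩ ⟨e 0, hfq0⟩)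
      + ∑ i : Fin n, DirectSum.of T i ((ct i).pair ⟨a * e i.succ, hpe i a⟩
          ⟨e i.succ, hfq i⟩), ?_⟩
    rw [map_add, map_sum, hΨ]
    have : ∀ i : Fin n, Ψ (DirectSum.of T i ((ct i).pair ⟨a * e i.succ, hpe i a⟩
        ⟨e i.succ, hfq i⟩)) = a * e i.succ := by
      intro i
      rw [hΨ]
      rw [mul_assoc, hidem i.succ]
    rw [Finset.sum_congr rfl fun i _ => this i]
    dsimp only
    rw [mul_assoc, hidem 0, ← Finset.mul_sum, ← mul_add,
      ← Fin.sum_univ_succ (f := e), hsum, mul_one]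
  · -- left A-linearity
    intro b t
    induction t using DirectSum.induction_on with
    | zero => simp
    | of i x =>
      rw [hof A b i x]
      have hx : x ∈ AddSubgroup.closure
          (Set.range fun z : ↥(lIdeal (e 0 + e i.succ)) × ↥(rIdeal (e 0 + e i.succ)) =>
            (ct i).pair z.1 z.2) := (ct i).span ▸ AddSubgroup.mem_top x
      induction hx using AddSubgroup.closure_induction with
      | mem y hy =>
        obtain ⟨⟨p, q⟩, rfl⟩ := hy
        rw [hL i b p q, hΨ, hΨ]
        have : (b • p).1 = b * p.1 := rfl
        rw [this, mul_assoc]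
      | zero => simp
      | add y z _ _ hy hz =>
        rw [smul_add, map_add, map_add, map_add, hy, hz, map_add, mul_add]
      | neg y _ hy =>
        rw [smul_neg, map_neg, map_neg, map_neg, hy, map_neg, mul_neg]
    | add s t hs ht =>
      rw [smul_add, map_add, map_add, hs, ht, mul_add]
  · -- right A-linearity
    intro b t
    induction t using DirectSum.induction_on with
    | zero => simp
    | of i x =>
      rw [hof Aᵐᵒᵖ (MulOpposite.op b) i x]
      have hx : x ∈ AddSubgroup.closure
          (Set.range fun z : ↥(lIdeal (e 0 + e i.succ)) × ↥(rIdeal (e 0 + e i.succ)) =>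
            (ct i).pair z.1 z.2) := (ct i).span ▸ AddSubgroup.mem_top x
      induction hx using AddSubgroup.closure_induction with
      | mem y hy =>
        obtain ⟨⟨p, q⟩, rfl⟩ := hy
        rw [hR i b p q, hΨ, hΨ]
        dsimp only
        rw [mul_assoc]
      | zero => simp
      | add y z _ _ hy hz =>
        rw [smul_add, map_add, map_add, map_add, hy, hz, map_add, add_mul]
      | neg y _ hy =>
        rw [smul_neg, map_neg, map_neg, map_neg, hy, map_neg, neg_mul]
    | add s t hs ht =>
      rw [smul_add, map_add, map_add, hs, ht, add_mul]
end

section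
/- Let A be a unital ring with complete orthogonal idempotents e_0, …, e_n, and set f_i = e_0 + e_i for 1 ≤ i ≤ n. Assume the base contains 1/n (e.g. A is an algebra over a field of characteristic zero). Define P : A → ⊕_{i=1}^n A f_i ⊗_{f_i A f_i} f_i A by sending p ∈ e_j A (for 1 ≤ j ≤ n) to the tuple with f_j ⊗ p in the j-th slot and zeros elsewhere, and p ∈ e_0 A to (1/n)(f_1 ⊗ p, …, f_n ⊗ p), extended additively over the decomposition A = ⊕_{j=0}^n e_j A. Then P is a homomorphism of right A-modules, and Ψ ∘ P = id_A, where Ψ is the multiplication map of the previous statement. -/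
open DirectSum


universe u

/-- With `A` a unital algebra over a field `k` of characteristic zero,
`e₀,…,e_n` complete orthogonal idempotents, `f_i = e₀+e_i`, the map
`P : A → ⊕_{i=1}^n A f_i ⊗_{f_i A f_i} f_i A` sending `p ∈ e_j A` (for `j ≥ 1`) to
`f_j ⊗ p` in the `j`-th slot and `p ∈ e₀ A` to `(1/n)(f_1 ⊗ p, …, f_n ⊗ p)` is a
homomorphism of right `A`-modules, and `Ψ ∘ P = id_A`. -/
theorem stmt_5 {k A : Type u} [Field k] [CharZero k] [Ring A] [Algebra k A]
    {n : ℕ} (hn : 0 < n)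
    (e : Fin (n + 1) → A) (hidem : ∀ i, IsIdempotentElem (e i))
    (horth : ∀ i j, i ≠ j → e i * e j = 0) (hsum : ∑ i, e i = 1)
    (T : Fin n → Type u) [∀ i, AddCommGroup (T i)]
    (ct : ∀ i : Fin n, CornerTensor (e 0 + e i.succ) (fIdem e hidem horth i)
      ↥(rIdeal (e 0 + e i.succ)) (T i))
    [∀ i, Module Aᵐᵒᵖ (T i)]
    (hR : ∀ (i : Fin n) (b : A) (p : ↥(lIdeal (e 0 + e i.succ)))
      (q : ↥(rIdeal (e 0 + e i.succ))),
      MulOpposite.op b • (ct i).pair p q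
        = (ct i).pair p ⟨q.1 * b, by
            show (e 0 + e i.succ) * (q.1 * b) = q.1 * b
            rw [← mul_assoc, q.2]⟩)
    (Ψ : (⨁ i, T i) →+ A)
    (hΨ : ∀ (i : Fin n) (p : ↥(lIdeal (e 0 + e i.succ)))
      (q : ↥(rIdeal (e 0 + e i.succ))),
      Ψ (DirectSum.of T i ((ct i).pair p q)) = p.1 * q.1)
    (P : A →+ ⨁ i, T i)
    (hP0 : ∀ p : A, P (e 0 * p) = ∑ i : Fin n, DirectSum.of T i ((ct i).pair
        ⟨e 0 + e i.succ, (fIdem e hidem horth i)⟩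
        ⟨(n : k)⁻¹ • (e 0 * p), by
          show (e 0 + e i.succ) * ((n : k)⁻¹ • (e 0 * p)) = (n : k)⁻¹ • (e 0 * p)
          rw [mul_smul_comm, ← mul_assoc, add_mul, (hidem 0).eq,
            horth i.succ 0 (Fin.succ_ne_zero i), add_zero]⟩))
    (hPs : ∀ (j : Fin n) (p : A), P (e j.succ * p) = DirectSum.of T j ((ct j).pair
        ⟨e 0 + e j.succ, (fIdem e hidem horth j)⟩
        ⟨e j.succ * p, by
          show (e 0 + e j.succ) * (e j.succ * p) = e j.succ * p
          rw [← mul_assoc, add_mul, horth 0 j.succ (Fin.succ_ne_zero j).symm,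
            (hidem j.succ).eq, zero_add]⟩)) :
    (∀ (p a : A), P (p * a) = MulOpposite.op a • P p) ∧ (∀ p : A, Ψ (P p) = p) := by

  have hnk : (n : k) ≠ 0 := Nat.cast_ne_zero.mpr hn.ne'
  have hsum' : ∀ p : A, p = e 0 * p + ∑ j : Fin n, e j.succ * p := by
    intro p
    calc p = (∑ i, e i) * p := by rw [hsum, one_mul]
    _ = _ := by rw [Finset.sum_mul, Fin.sum_univ_succ]
  constructor
  · intro p a
    conv_lhs => rw [hsum' (p * a)]
    conv_rhs => rw [hsum' p]
    rw [map_add, map_add, smul_add, map_sum, map_sum, Finset.smul_sum]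
    congr 1
    · rw [hP0 (p * a), hP0 p]
      rw [Finset.smul_sum]
      refine Finset.sum_congr rfl fun i _ => ?_
      rw [← DirectSum.of_smul, hR]
      congr 1
      apply congrArg
      apply Subtype.ext
      show (n : k)⁻¹ • (e 0 * (p * a)) = ((n : k)⁻¹ • (e 0 * p)) * a
      rw [smul_mul_assoc, mul_assoc]
    · refine Finset.sum_congr rfl fun j _ => ?_
      rw [hPs j (p * a), hPs j p, ← DirectSum.of_smul, hR]
      congr 1
      apply congrArg
      exact Subtype.ext (mul_assoc _ _ _).symm
  · intro p
    conv_rhs => rw [hsum' p]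
    conv_lhs => rw [hsum' p]
    rw [map_add, map_add, map_sum, map_sum]
    congr 1
    · rw [hP0 p, map_sum]
      have : ∀ i : Fin n, Ψ (DirectSum.of T i ((ct i).pair
          ⟨e 0 + e i.succ, fIdem e hidem horth i⟩
          ⟨(n : k)⁻¹ • (e 0 * p), by
            show (e 0 + e i.succ) * ((n : k)⁻¹ • (e 0 * p)) = (n : k)⁻¹ • (e 0 * p)
            rw [mul_smul_comm, ← mul_assoc, add_mul, (hidem 0).eq,
              horth i.succ 0 (Fin.succ_ne_zero i), add_zero]⟩))
          = (n : k)⁻¹ • (e 0 * p) := by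
        intro i
        rw [hΨ]
        show (e 0 + e i.succ) * ((n : k)⁻¹ • (e 0 * p)) = (n : k)⁻¹ • (e 0 * p)
        rw [mul_smul_comm, ← mul_assoc, add_mul, (hidem 0).eq,
          horth i.succ 0 (Fin.succ_ne_zero i), add_zero]
      rw [Finset.sum_congr rfl fun i _ => this i, Finset.sum_const, Finset.card_univ,
        Fintype.card_fin, ← Nat.cast_smul_eq_nsmul k, smul_smul,
        mul_inv_cancel₀ hnk, one_smul]
    · refine Finset.sum_congr rfl fun j _ => ?_
      rw [hPs j p, hΨ]
      show (e 0 + e j.succ) * (e j.succ * p) = e j.succ * p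
      rw [← mul_assoc, add_mul, horth 0 j.succ (Fin.succ_ne_zero j).symm,
        (hidem j.succ).eq, zero_add]
end

section
/- Let A be a unital algebra over a field of characteristic zero with complete orthogonal idempotents e_0,…,e_n, and f_i = e_0 + e_i. Then for every left A-module F, the natural map ψ_F : ⊕_{i=1}^n A f_i ⊗_{f_i A f_i} f_i A ⊗_A F → F, given on the i-th summand by p ⊗ q ⊗ x ↦ (pq)·x, is surjective. -/
open DirectSum


universe u

/-- Let `A` be a unital algebra over a field of characteristic zero
with complete orthogonal idempotents `e₀,…,e_n` and `f_i = e₀ + e_i`. For every left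
`A`-module `F`, the natural map `ψ_F : ⊕_{i=1}^n A f_i ⊗_{f_i A f_i} f_i A ⊗_A F → F`,
given on the `i`-th summand by `p ⊗ q ⊗ x ↦ (pq)·x`, is surjective. Here
`f_i A ⊗_A F` is realised canonically as `f_i F = {x ∈ F | f_i • x = x}`. -/
theorem stmt_6 {k A F : Type u} [Field k] [CharZero k] [Ring A] [Algebra k A]
    [AddCommGroup F] [Module A F] {n : ℕ} (hn : 0 < n)
    (e : Fin (n + 1) → A) (hidem : ∀ i, IsIdempotentElem (e i))
    (horth : ∀ i j, i ≠ j → e i * e j = 0) (hsum : ∑ i, e i = 1)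
    (T : Fin n → Type u) [∀ i, AddCommGroup (T i)]
    (ct : ∀ i : Fin n, CornerTensor (e 0 + e i.succ) (fIdem e hidem horth i)
      ↥(eSub (e 0 + e i.succ) F) (T i))
    (ψ : (⨁ i, T i) →+ F)
    (hψ : ∀ (i : Fin n) (p : ↥(lIdeal (e 0 + e i.succ)))
      (x : ↥(eSub (e 0 + e i.succ) F)),
      ψ (DirectSum.of T i ((ct i).pair p x)) = p.1 • x.1) :
    Function.Surjective ψ := by
  intro y
  have mem : ∀ (i : Fin n) (a : A), a * (e 0 + e i.succ) = a → a • y ∈ ψ.range := by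
    intro i a ha
    set f := e 0 + e i.succ with hf
    have hfi : IsIdempotentElem f := fIdem e hidem horth i
    have hx : f • (f • y) = f • y := by rw [← mul_smul, hfi]
    refine ⟨DirectSum.of T i ((ct i).pair ⟨a, ha⟩ ⟨f • y, hx⟩), ?_⟩
    rw [hψ i ⟨a, ha⟩ ⟨f • y, hx⟩]
    show a • f • y = a • y
    rw [← mul_smul, ha]
  have h0 : (e 0) • y ∈ ψ.range := by
    have i0 : Fin n := ⟨0, hn⟩
    refine mem i0 (e 0) ?_
    rw [mul_add, hidem 0, horth 0 i0.succ (Fin.succ_ne_zero i0).symm, add_zero]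
  have hj : ∀ j : Fin (n + 1), (e j) • y ∈ ψ.range := by
    intro j
    rcases eq_or_ne j 0 with rfl | hne
    · exact h0
    · obtain ⟨i, rfl⟩ : ∃ i : Fin n, j = i.succ := ⟨j.pred hne, (Fin.succ_pred j hne).symm⟩
      refine mem i (e i.succ) ?_
      rw [mul_add, hidem i.succ, horth i.succ 0 (Fin.succ_ne_zero i), zero_add]
  have : y ∈ ψ.range := by
    have : (∑ j, e j) • y ∈ ψ.range := by
      rw [Finset.sum_smul]
      exact AddSubgroup.sum_mem _ (fun j _ => hj j)
    rwa [hsum, one_smul] at this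
  exact this
end

section
/- Let A be a unital algebra over a field of characteristic zero with complete orthogonal idempotents e_0,…,e_n and f_i = e_0 + e_i. For every left A-module F, F is isomorphic as a left A-module to the image of the composite φ_F ∘ ψ_F : ⊕_{i=1}^n A f_i ⊗_{f_iAf_i} f_i A ⊗_A F → ⊕_{i=1}^n Hom_{f_iAf_i}(A, f_i A ⊗_A F). -/
open DirectSum


universe u

/-- Let `A` be a unital algebra over a field of characteristic zero with
complete orthogonal idempotents `e₀,…,e_n` and `f_i = e₀ + e_i`. For every left
`A`-module `F`, `F` is isomorphic (compatibly with `φ_F`) to the image of the composite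
`φ_F ∘ ψ_F : ⊕_{i=1}^n A f_i ⊗_{f_iAf_i} f_i A ⊗_A F → ⊕_{i=1}^n Hom_{f_iAf_i}(A, f_i A ⊗_A F)`,
with `f_i A ⊗_A F` realised canonically as `f_i F`. -/
theorem stmt_9 {k A F : Type u} [Field k] [CharZero k] [Ring A] [Algebra k A]
    [AddCommGroup F] [Module A F] {n : ℕ} (hn : 0 < n)
    (e : Fin (n + 1) → A) (hidem : ∀ i, IsIdempotentElem (e i))
    (horth : ∀ i j, i ≠ j → e i * e j = 0) (hsum : ∑ i, e i = 1)
    (T : Fin n → Type u) [∀ i, AddCommGroup (T i)]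
    (ct : ∀ i : Fin n, CornerTensor (e 0 + e i.succ) (fIdem e hidem horth i)
      ↥(eSub (e 0 + e i.succ) F) (T i))
    (ψ : (⨁ i, T i) →+ F)
    (hψ : ∀ (i : Fin n) (p : ↥(lIdeal (e 0 + e i.succ)))
      (x : ↥(eSub (e 0 + e i.succ) F)),
      ψ (DirectSum.of T i ((ct i).pair p x)) = p.1 • x.1)
    (φ : F →+ ∀ i : Fin n, ↥(homSub (e 0 + e i.succ) (fIdem e hidem horth i)
      ↥(eSub (e 0 + e i.succ) F)))
    (hφ : ∀ (x : F) (i : Fin n) (a : A),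
      ((((φ x i).1 : A →+ ↥(eSub (e 0 + e i.succ) F)) a : ↥(eSub (e 0 + e i.succ) F)) : F)
        = (e 0 + e i.succ) • (a • x)) :
    ∃ E : F ≃+ ↥((φ.comp ψ).range), ∀ x : F, (E x).1 = φ x := by
  classical
  set i0 : Fin n := ⟨0, hn⟩
  -- injectivity of φ
  have hinj : Function.Injective φ := by
    rw [injective_iff_map_eq_zero]
    intro x hx
    have key : ∀ (i : Fin n) (a : A), (e 0 + e i.succ) • (a • x) = 0 := by
      intro i a
      rw [← hφ x i a, hx]
      rfl
    have h0 : e 0 • x = 0 := by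
      have := key i0 (e 0)
      rwa [← mul_smul, add_mul, (hidem 0), horth i0.succ 0 (Fin.succ_ne_zero i0),
        add_zero] at this
    have hs : ∀ j : Fin n, e j.succ • x = 0 := by
      intro j
      have := key j (e j.succ)
      rwa [← mul_smul, add_mul, horth 0 j.succ (Fin.succ_ne_zero j).symm,
        (hidem j.succ), zero_add] at this
    have : x = (∑ i, e i) • x := by rw [hsum, one_smul]
    rw [Fin.sum_univ_succ, add_smul, Finset.sum_smul, h0, zero_add] at this
    rw [this]
    exact Finset.sum_eq_zero fun j _ => hs j
  -- surjectivity of ψ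
  have hsurj : Function.Surjective ψ := by
    intro x
    have hmem : ∀ i : Fin n, (e 0 + e i.succ) • x ∈ eSub (e 0 + e i.succ) F := by
      intro i
      show (e 0 + e i.succ) • ((e 0 + e i.succ) • x) = (e 0 + e i.succ) • x
      rw [← mul_smul, fIdem e hidem horth i]
    have hp0 : (e 0 : A) ∈ lIdeal (e 0 + e i0.succ) := by
      show e 0 * (e 0 + e i0.succ) = e 0
      rw [mul_add, hidem 0, horth 0 i0.succ (Fin.succ_ne_zero i0).symm, add_zero]
    have hpj : ∀ j : Fin n, (e j.succ : A) ∈ lIdeal (e 0 + e j.succ) := by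
      intro j
      show e j.succ * (e 0 + e j.succ) = e j.succ
      rw [mul_add, horth j.succ 0 (Fin.succ_ne_zero j), hidem j.succ, zero_add]
    refine ⟨DirectSum.of T i0 ((ct i0).pair ⟨e 0, hp0⟩ ⟨_, hmem i0⟩)
      + ∑ j, DirectSum.of T j ((ct j).pair ⟨e j.succ, hpj j⟩ ⟨_, hmem j⟩), ?_⟩
    rw [map_add, map_sum, hψ]
    have h1 : (e 0 : A) • ((e 0 + e i0.succ) • x) = e 0 • x := by
      rw [← mul_smul, mul_add, hidem 0, horth 0 i0.succ (Fin.succ_ne_zero i0).symm,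
        add_zero]
    have h2 : ∀ j : Fin n, ψ (DirectSum.of T j ((ct j).pair ⟨e j.succ, hpj j⟩
        ⟨_, hmem j⟩)) = e j.succ • x := by
      intro j
      rw [hψ]
      show (e j.succ : A) • ((e 0 + e j.succ) • x) = e j.succ • x
      rw [← mul_smul, mul_add, horth j.succ 0 (Fin.succ_ne_zero j), hidem j.succ,
        zero_add]
    show (e 0 : A) • ((e 0 + e i0.succ) • x) + _ = x
    rw [h1]
    calc e 0 • x + ∑ j, ψ (DirectSum.of T j ((ct j).pair ⟨e j.succ, hpj j⟩ ⟨_, hmem j⟩))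
        = e 0 • x + ∑ j : Fin n, e (Fin.succ j) • x := by
          congr 1; exact Finset.sum_congr rfl fun j _ => h2 j
      _ = (∑ i, e i) • x := by rw [Fin.sum_univ_succ, add_smul, Finset.sum_smul]
      _ = x := by rw [hsum, one_smul]
  -- build the equivalence
  have hmem' : ∀ x : F, φ x ∈ (φ.comp ψ).range := by
    intro x
    obtain ⟨y, hy⟩ := hsurj x
    exact ⟨y, by simp [hy]⟩
  let g : F →+ ↥((φ.comp ψ).range) :=
    { toFun := fun x => ⟨φ x, hmem' x⟩
      map_zero' := by ext; simp
      map_add' := fun x y => by ext; simp }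
  have hgbij : Function.Bijective g := by
    constructor
    · intro x y hxy
      exact hinj (congrArg Subtype.val hxy)
    · rintro ⟨z, t, ht⟩
      exact ⟨ψ t, Subtype.ext ht⟩
  exact ⟨AddEquiv.ofBijective g hgbij, fun x => rfl⟩
end
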